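/- Let u : ℝ → ℝ be seven times continuously differentiable and x ∈ ℝ. For H > 0 define μδu(x) = (u(x+H) − u(x−H))/2, and μδ³, μδ⁵ by composing with δ² (where δ²u(x) = u(x+H) − 2u(x) + u(x−H)). Then (1/H)[ μδu(x) − (1/6)μδ³u(x) + (1/30)μδ⁵u(x) ] = u′(x) + O(H⁶) as H → 0. -/

import Mathlib

open Real Asymptotics Filter
open Set Finset

lemma myIDW {m : ℕ} {f : ℝ → ℝ} {s : Set ℝ} {x : ℝ}
    (hf : ContDiff ℝ (m : ℕ∞) f) (hs : UniqueDiffOn ℝ s) (hx : x ∈ s) :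
    iteratedDerivWithin m f s x = iteratedDeriv m f x := by
  have h := (contDiff_iff_ftaylorSeries.mp hf).hasFTaylorSeriesUpToOn s
  rw [iteratedDerivWithin_eq_iteratedFDerivWithin, iteratedDeriv_eq_iteratedFDeriv,
    ← h.eq_iteratedFDerivWithin_of_uniqueDiffOn le_rfl hs hx]
  rfl

lemma taylorO (u : ℝ → ℝ) (hu : ContDiff ℝ 7 u) (x a : ℝ) :
    (fun H : ℝ => u (x + a * H)
        - ∑ j ∈ Finset.range 7, H ^ j / (j.factorial) * (a ^ j * iteratedDeriv j u x))
      =O[nhdsWithin 0 (Set.Ioi 0)] fun H : ℝ => H ^ 7 := by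
  set g : ℝ → ℝ := fun t => u (x + a * t) with hg_def
  have hg : ContDiff ℝ 7 g :=
    hu.comp (contDiff_const.add (contDiff_const.mul contDiff_id))
  have hf1 : ContDiff ℝ 7 (fun t : ℝ => u (x + t)) :=
    hu.comp (contDiff_const.add contDiff_id)
  have hderg : ∀ j : ℕ, j ≤ 7 → iteratedDeriv j g 0 = a ^ j * iteratedDeriv j u x := by
    intro j hj
    have h1 : iteratedDeriv j g 0 = a ^ j * iteratedDeriv j (fun t : ℝ => u (x + t)) (a * 0) := by
      have := iteratedDeriv_comp_const_mul (n := j) (f := fun t : ℝ => u (x + t))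
        (hf1.of_le (by exact_mod_cast hj)) a
      exact congrFun this 0
    rw [h1, iteratedDeriv_comp_const_add j u x]
    norm_num
  obtain ⟨C, hC⟩ := exists_taylor_mean_remainder_bound (n := 6) (a := (0:ℝ)) (b := 1)
    zero_le_one (by exact_mod_cast hg.contDiffOn)
  rw [isBigO_iff]
  refine ⟨C, ?_⟩
  filter_upwards [Ioc_mem_nhdsGT zero_lt_one] with H hH
  have hmem : H ∈ Icc (0:ℝ) 1 := ⟨hH.1.le, hH.2⟩
  have key := hC H hmem
  have htay : taylorWithinEval g 6 (Icc 0 1) 0 H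
      = ∑ j ∈ Finset.range 7, H ^ j / (j.factorial) * (a ^ j * iteratedDeriv j u x) := by
    rw [taylor_within_apply]
    refine Finset.sum_congr rfl fun j hj => ?_
    have hj7 : j ≤ 7 := le_of_lt (Finset.mem_range.mp hj)
    rw [myIDW (hg.of_le (by exact_mod_cast Nat.cast_le.mpr hj7 : ((j : ℕ∞) : WithTop ℕ∞) ≤ ((7:ℕ∞) : WithTop ℕ∞))) (uniqueDiffOn_Icc zero_lt_one)
      (by simp : (0:ℝ) ∈ Icc (0:ℝ) 1), hderg j hj7]
    rw [smul_eq_mul]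
    ring
  rw [htay] at key
  simp only [sub_zero] at key
  have he : C * H ^ (6 + 1) = C * ‖H ^ 7‖ := by
    rw [Real.norm_eq_abs, abs_of_nonneg (pow_nonneg hH.1.le 7)]
  exact le_of_le_of_eq key he



theorem advection_discretisation_sixth_order
    (u : ℝ → ℝ) (hu : ContDiff ℝ 7 u) (x : ℝ) :
    (fun H : ℝ =>
        (1 / H) *
            (((u (x + H) - u (x - H)) / 2)
              - (1 / 6) *
                  ((u (x + 2 * H) - 2 * u (x + H) + 2 * u (x - H) - u (x - 2 * H)) / 2)
              + (1 / 30) *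
                  ((u (x + 3 * H) - 4 * u (x + 2 * H) + 5 * u (x + H) - 5 * u (x - H)
                      + 4 * u (x - 2 * H) - u (x - 3 * H)) / 2))
          - deriv u x)
      =O[nhdsWithin 0 (Set.Ioi 0)] fun H : ℝ => H ^ 6 := by
  have h1 := taylorO u hu x 1
  have hm1 := taylorO u hu x (-1)
  have h2 := taylorO u hu x 2
  have hm2 := taylorO u hu x (-2)
  have h3 := taylorO u hu x 3
  have hm3 := taylorO u hu x (-3)
  have hcomb := (((((h1.const_mul_left (3/4)).sub (hm1.const_mul_left (3/4))).sub
      (h2.const_mul_left (3/20))).add (hm2.const_mul_left (3/20))).add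
      (h3.const_mul_left (1/60))).sub (hm3.const_mul_left (1/60))
  have hinv : (fun H : ℝ => H⁻¹) =O[nhdsWithin 0 (Set.Ioi 0)] fun H : ℝ => H⁻¹ :=
    isBigO_refl _ _
  have hmul := hinv.mul hcomb
  refine hmul.congr' ?_ ?_
  · filter_upwards [self_mem_nhdsWithin] with H hH
    have hH0 : H ≠ 0 := ne_of_gt hH
    have hd1 : iteratedDeriv 1 u x = deriv u x := congrFun iteratedDeriv_one x
    simp only [Finset.sum_range_succ, Finset.sum_range_zero, Nat.factorial,
      Nat.cast_ofNat, Nat.cast_one]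
    push_cast
    rw [show x + 1 * H = x + H by ring, show x + (-1) * H = x - H by ring,
      show x + (-2) * H = x - 2 * H by ring, show x + (-3) * H = x - 3 * H by ring,
      hd1]
    field_simp
    ring
  · filter_upwards [self_mem_nhdsWithin] with H hH
    have hH0 : H ≠ 0 := ne_of_gt hH
    field_simp
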